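/- Let T > 0 and let (U_{s,t})_{s≤t} be an evolution family of bounded linear operators on H such that ‖U_{s,t}‖ ≤ c e^{−ω(t−s)} for some constants c, ω ∈ (0,∞) and all s ≤ t. Let (η_t)_{t∈ℝ} be a family of probability measures on H such that η_t is the pushforward of η_s under U_{s,t} for all s ≤ t, and η_{t+T} = η_t for all t ∈ ℝ. Then η_t = δ_0 (the Dirac measure at 0) for every t ∈ ℝ. Consequently, if (ν_t) and (μ_t) are families of probability measures with ν_t = η_t ∗ μ_t for all t, then ν_t = μ_t for all t. -/

import Mathlib

open MeasureTheory

lemma aux_eq_dirac {H : Type*} [Zero H] [MeasurableSpace H] [MeasurableSingletonClass H]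
    (μ : Measure H) [IsProbabilityMeasure μ] (h0 : μ {(0 : H)}ᶜ = 0) :
    μ = Measure.dirac 0 := by
  ext s hs
  have hμs : μ s = μ (s ∩ {0}) := by
    refine le_antisymm ?_ (measure_mono Set.inter_subset_left)
    calc μ s ≤ μ (s ∩ {0}) + μ (s \ {0}) := measure_le_inter_add_diff μ s {0}
      _ ≤ μ (s ∩ {0}) + μ {(0:H)}ᶜ := by
          gcongr; exact fun x hx => hx.2
      _ = μ (s ∩ {0}) := by rw [h0, add_zero]
  rw [Measure.dirac_apply' _ hs, hμs]
  by_cases h : (0 : H) ∈ s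
  · have : s ∩ {0} = {0} := by
      ext x; simp only [Set.mem_inter_iff, Set.mem_singleton_iff]
      exact ⟨fun h => h.2, fun hx => by subst hx; exact ⟨h, rfl⟩⟩
    rw [this, Set.indicator_of_mem h]
    have := measure_compl (s := {(0:H)}) (measurableSet_singleton 0) (measure_ne_top μ _)
    rw [h0, measure_univ] at this
    have h1 : μ {(0:H)} = 1 := by
      have := measure_add_measure_compl (μ := μ) (measurableSet_singleton (0:H))
      rw [h0, add_zero, measure_univ] at this
      exact this
    simp [h1]
  · have : s ∩ {0} = ∅ := by
      ext x
      simp only [Set.mem_inter_iff, Set.mem_singleton_iff, Set.mem_empty_iff_false, iff_false,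
        not_and]
      rintro hx rfl; exact h hx
    rw [this, Set.indicator_of_notMem h]
    simp

set_option maxHeartbeats 1000000 in
theorem stmt9
    {H : Type*} [NormedAddCommGroup H] [InnerProductSpace ℝ H] [CompleteSpace H]
    [TopologicalSpace.SeparableSpace H] [MeasurableSpace H] [BorelSpace H]
    (T : ℝ) (hT : 0 < T)
    (U : ℝ → ℝ → H →L[ℝ] H)
    (hU_id : ∀ t : ℝ, U t t = ContinuousLinearMap.id ℝ H)
    (hU_comp : ∀ s r t : ℝ, s ≤ r → r ≤ t → (U r t).comp (U s r) = U s t)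
    (c ω : ℝ) (hc : 0 < c) (hω : 0 < ω)
    (hnorm : ∀ s t : ℝ, s ≤ t → ‖U s t‖ ≤ c * Real.exp (-ω * (t - s)))
    (η : ℝ → Measure H) (hηprob : ∀ t : ℝ, IsProbabilityMeasure (η t))
    (hmap : ∀ s t : ℝ, s ≤ t → η t = (η s).map (U s t))
    (hper : ∀ t : ℝ, η (t + T) = η t) :
    (∀ t : ℝ, η t = Measure.dirac 0) ∧
      ∀ (ν μ' : ℝ → Measure H), (∀ t : ℝ, IsProbabilityMeasure (μ' t)) →
        (∀ t : ℝ, ν t = Measure.conv (η t) (μ' t)) → ∀ t : ℝ, ν t = μ' t := by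
  -- periodicity: η (t - n*T) = η t
  have hper' : ∀ (t : ℝ) (n : ℕ), η (t - n * T) = η t := by
    intro t n
    induction n with
    | zero => simp
    | succ n ih =>
      have h1 : t - n * T = (t - ((n:ℝ)+1) * T) + T := by ring
      have h2 : (((n+1 : ℕ)):ℝ) = (n:ℝ)+1 := by push_cast; ring
      rw [h2, ← ih, h1, hper]
  -- main claim: every ball around 0 has full measure
  have hball : ∀ (t : ℝ) (ε : ℝ), 0 < ε → η t (Metric.ball 0 ε) = 1 := by
    intro t ε hε
    haveI := hηprob t
    refine le_antisymm prob_le_one ?_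
    have key : ∀ R : ℕ, η t (Metric.ball 0 R) ≤ η t (Metric.ball 0 ε) := by
      intro R
      -- choose n with c * exp (-ω * n * T) * R ≤ ε i.e. decay small
      obtain ⟨n, hn⟩ : ∃ n : ℕ, c * Real.exp (-ω * (n * T)) * R < ε := by
        have hmulT : Filter.Tendsto (fun n : ℕ => (n : ℝ) * T) Filter.atTop Filter.atTop :=
          Filter.Tendsto.atTop_mul_const hT tendsto_natCast_atTop_atTop
        have harg : Filter.Tendsto (fun n : ℕ => -ω * ((n : ℝ) * T)) Filter.atTop Filter.atBot := by
          exact (Filter.tendsto_neg_atBot_iff.mpr (hmulT.const_mul_atTop hω)).congr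
            (fun n => by ring)
        have hlim : Filter.Tendsto (fun n : ℕ => c * Real.exp (-ω * (n * T)) * R)
            Filter.atTop (nhds (c * 0 * R)) :=
          Filter.Tendsto.mul_const _ (Filter.Tendsto.const_mul _
            (Real.tendsto_exp_atBot.comp harg))
        rw [mul_zero, zero_mul] at hlim
        exact (hlim.eventually_lt_const hε).exists
      set s := t - n * T with hs
      have hst : s ≤ t := by
        have : (0:ℝ) ≤ n * T := by positivity
        simp [hs]; linarith
      have hmaps : η t = (η s).map (U s t) := hmap s t hst
      have hnorm' : ‖U s t‖ ≤ c * Real.exp (-ω * (n * T)) := by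
        have h2 : t - s = n * T := by rw [hs]; ring
        rw [← h2]
        exact hnorm s t hst
      have hsub : (U s t) ⁻¹' (Metric.ball 0 ε) ⊇ Metric.ball 0 R := by
        intro x hx
        simp only [Set.mem_preimage, Metric.mem_ball, dist_zero_right] at *
        calc ‖U s t x‖ ≤ ‖U s t‖ * ‖x‖ := (U s t).le_opNorm x
          _ ≤ c * Real.exp (-ω * (n * T)) * ‖x‖ := by
              gcongr <;> positivity
          _ ≤ c * Real.exp (-ω * (n * T)) * R := by
              gcongr <;> first | positivity | exact hx.le
          _ < ε := hn
      calc η t (Metric.ball 0 R) = η s (Metric.ball 0 R) := by rw [hs, hper']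
        _ ≤ η s ((U s t) ⁻¹' (Metric.ball 0 ε)) := measure_mono hsub
        _ = η t (Metric.ball 0 ε) := by
            rw [hmaps, Measure.map_apply (U s t).continuous.measurable measurableSet_ball]
      done
    have hunion : (⋃ R : ℕ, Metric.ball (0:H) R) = Set.univ := Metric.iUnion_ball_nat 0
    have hsup : η t Set.univ ≤ η t (Metric.ball 0 ε) := by
      rw [← hunion]
      calc η t (⋃ R : ℕ, Metric.ball (0:H) R)
          = ⨆ R : ℕ, η t (Metric.ball (0:H) R) := by
            apply Directed.measure_iUnion
            exact Monotone.directed_le fun a b hab =>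
              Metric.ball_subset_ball (Nat.cast_le.mpr hab)
        _ ≤ η t (Metric.ball 0 ε) := iSup_le key
    rwa [measure_univ] at hsup
  have hdirac : ∀ t : ℝ, η t = Measure.dirac 0 := by
    intro t
    haveI := hηprob t
    apply aux_eq_dirac
    have hcomplnull : ∀ n : ℕ, η t (Metric.ball (0:H) (1/(n+1)))ᶜ = 0 := by
      intro n
      have := hball t (1/(n+1)) (by positivity)
      rw [measure_compl measurableSet_ball (measure_ne_top _ _), this, measure_univ, tsub_self]
    have hcover : ({(0:H)}ᶜ : Set H) ⊆ ⋃ n : ℕ, (Metric.ball (0:H) (1/(n+1)))ᶜ := by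
      intro x hx
      have hx0 : ‖x‖ > 0 := by
        simp only [Set.mem_compl_iff, Set.mem_singleton_iff] at hx
        exact norm_pos_iff.mpr hx
      obtain ⟨n, hn⟩ := exists_nat_gt (1 / ‖x‖)
      refine Set.mem_iUnion.mpr ⟨n, ?_⟩
      simp only [Set.mem_compl_iff, Metric.mem_ball, dist_zero_right, not_lt]
      rw [div_le_iff₀ (by positivity)]
      rw [div_lt_iff₀ hx0] at hn
      nlinarith
    exact measure_mono_null hcover (measure_iUnion_null hcomplnull)
  refine ⟨hdirac, ?_⟩
  intro ν μ' hμ'prob hconv t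
  haveI := hμ'prob t
  rw [hconv t, hdirac t]
  exact MeasureTheory.Measure.dirac_zero_conv (μ' t)
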